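/- Let 0 < n < N and suppose r_i > 0 for all i. Define V_n as the minimum of Σ_{i=1}^N r_i²(1−π_i)/π_i over all vectors π with 0 < π_i ≤ 1 and Σ_{i=1}^N π_i ≤ n. Then among all pairs (p,δ) where p is a sampling design with π_i > 0 for all i and expected sample size E_p[|S|] ≤ n, and δ is an unbiased estimator, inf_{p,δ} sup_{y∈Θ} R(δ,p;y) = V_n. Moreover V_n is attained by sampling each unit independently with inclusion probabilities π_i* = min(1, c r_i), where c > 0 is chosen so that Σ_{i=1}^N π_i* = n, together with the midpoint-differenced Horvitz–Thompson estimator T̂. -/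

import Mathlib

namespace MMX
open Finset


lemma bern_sum {N : ℕ} (u v : Fin N → ℝ) :
    ∑ s : Finset (Fin N), ∏ i, (if i ∈ s then u i else v i) = ∏ i, (u i + v i) := by
  classical
  rw [Finset.prod_add]
  rw [Finset.powerset_univ]
  refine Finset.sum_congr rfl fun t _ => ?_
  rw [← Finset.prod_mul_prod_compl t (fun i => if i ∈ t then u i else v i)]
  congr 1
  · exact Finset.prod_congr rfl fun i hi => by simp [hi]
  · refine Finset.prod_congr (by simp [Finset.compl_eq_univ_sdiff]) fun i hi => by
      simp at hi; simp [hi]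

/-- indicator as real -/
def Ind {N : ℕ} (i : Fin N) (s : Finset (Fin N)) : ℝ := if i ∈ s then 1 else 0

lemma bern_incl {N : ℕ} (π : Fin N → ℝ) (i : Fin N) :
    ∑ s : Finset (Fin N), Ind i s * ∏ j, (if j ∈ s then π j else 1 - π j) = π i := by
  classical
  have key : ∀ s : Finset (Fin N),
      Ind i s * ∏ j, (if j ∈ s then π j else 1 - π j)
        = ∏ j, (if j ∈ s then π j else (if j = i then 0 else 1 - π j)) := by
    intro s
    by_cases h : i ∈ s
    · simp only [Ind, if_pos h, one_mul]
      refine Finset.prod_congr rfl fun j _ => ?_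
      by_cases hj : j ∈ s
      · simp [hj]
      · have : j ≠ i := fun e => hj (e ▸ h)
        simp [hj, this]
    · simp only [Ind, if_neg h, zero_mul]
      refine (Finset.prod_eq_zero (Finset.mem_univ i) ?_).symm
      simp [h]
  rw [Finset.sum_congr rfl (fun s _ => key s), bern_sum]
  rw [Finset.prod_eq_single i]
  · simp
  · intro j _ hj; simp [hj]
  · simp

lemma bern_pair {N : ℕ} (π : Fin N → ℝ) (i j : Fin N) (hij : i ≠ j) :
    ∑ s : Finset (Fin N), Ind i s * Ind j s * ∏ k, (if k ∈ s then π k else 1 - π k)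
      = π i * π j := by
  classical
  have key : ∀ s : Finset (Fin N),
      Ind i s * Ind j s * ∏ k, (if k ∈ s then π k else 1 - π k)
        = ∏ k, (if k ∈ s then π k else (if k = i ∨ k = j then 0 else 1 - π k)) := by
    intro s
    by_cases hi : i ∈ s
    · by_cases hj : j ∈ s
      · simp only [Ind, if_pos hi, if_pos hj, one_mul]
        refine Finset.prod_congr rfl fun k _ => ?_
        by_cases hk : k ∈ s
        · simp [hk]
        · have h1 : k ≠ i := fun e => hk (e ▸ hi)
          have h2 : k ≠ j := fun e => hk (e ▸ hj)
          simp [hk, h1, h2]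
      · simp only [Ind, if_neg hj, mul_zero, zero_mul]
        refine (Finset.prod_eq_zero (Finset.mem_univ j) ?_).symm
        simp [hj]
    · simp only [Ind, if_neg hi, zero_mul]
      refine (Finset.prod_eq_zero (Finset.mem_univ i) ?_).symm
      simp [hi]
  rw [Finset.sum_congr rfl (fun s _ => key s), bern_sum]
  have h1 : ∀ k : Fin N, (π k + if k = i ∨ k = j then 0 else 1 - π k)
      = (if k = i ∨ k = j then π k else 1) := by
    intro k
    by_cases hk : k = i ∨ k = j
    · rw [if_pos hk, if_pos hk]; ring
    · rw [if_neg hk, if_neg hk]; ring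
  rw [Finset.prod_congr rfl (fun k _ => h1 k)]
  rw [← Finset.mul_prod_erase Finset.univ _ (Finset.mem_univ i)]
  rw [← Finset.mul_prod_erase _ _ (Finset.mem_erase.2 ⟨Ne.symm hij, Finset.mem_univ j⟩)]
  have h2 : ∏ k ∈ (Finset.univ.erase i).erase j,
      (if k = i ∨ k = j then π k else 1) = 1 := by
    refine Finset.prod_eq_one fun k hk => ?_
    have := Finset.mem_erase.1 hk
    have := Finset.mem_erase.1 this.2
    simp_all
  rw [h2]
  simp [hij]


def mmflip {N : ℕ} (i : Fin N) (σ : Fin N → Bool) : Fin N → Bool :=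
  Function.update σ i (!(σ i))

lemma mmflip_invol {N : ℕ} (i : Fin N) : Function.Involutive (mmflip i) := by
  intro σ
  funext j
  by_cases h : j = i
  · subst h; simp [mmflip, Function.update]
  · simp [mmflip, Function.update, h]

lemma mmflip_apply_self {N : ℕ} (i : Fin N) (σ : Fin N → Bool) :
    mmflip i σ i = !(σ i) := by simp [mmflip]

lemma mmflip_apply_ne {N : ℕ} (i j : Fin N) (σ : Fin N → Bool) (h : j ≠ i) :
    mmflip i σ j = σ j := by simp [mmflip, Function.update, h]

lemma flip_sum_zero {N : ℕ} (i : Fin N) (F : (Fin N → Bool) → ℝ)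
    (h : ∀ σ, F (mmflip i σ) = -F σ) : ∑ σ : Fin N → Bool, F σ = 0 := by
  have h1 : ∑ σ : Fin N → Bool, F σ = ∑ σ : Fin N → Bool, F (mmflip i σ) :=
    (Fintype.sum_bijective (mmflip i) (mmflip_invol i).bijective _ _ (fun _ => rfl)).symm
  have h2 : ∑ σ : Fin N → Bool, F (mmflip i σ) = -∑ σ : Fin N → Bool, F σ := by
    simp [h]
  linarith [h1, h2]

def eps {N : ℕ} (σ : Fin N → Bool) (i : Fin N) : ℝ := if σ i then 1 else -1

lemma eps_mmflip_self {N : ℕ} (i : Fin N) (σ : Fin N → Bool) :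
    eps (mmflip i σ) i = -eps σ i := by
  simp [eps, mmflip_apply_self]; cases σ i <;> simp

lemma eps_mmflip_ne {N : ℕ} (i j : Fin N) (σ : Fin N → Bool) (h : j ≠ i) :
    eps (mmflip i σ) j = eps σ j := by simp [eps, mmflip_apply_ne i j σ h]

lemma eps_sq {N : ℕ} (σ : Fin N → Bool) (i : Fin N) : eps σ i * eps σ i = 1 := by
  simp [eps]; cases σ i <;> simp

lemma card_bool_fun (N : ℕ) : (Finset.univ : Finset (Fin N → Bool)).card = 2 ^ N := by
  simp [Finset.card_univ]

lemma sum_eps {N : ℕ} (i : Fin N) : ∑ σ : Fin N → Bool, eps σ i = 0 := by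
  exact flip_sum_zero i _ (fun σ => eps_mmflip_self i σ)

lemma sum_eps_mul {N : ℕ} (i j : Fin N) :
    ∑ σ : Fin N → Bool, eps σ i * eps σ j =
      if i = j then (2 : ℝ) ^ N else 0 := by
  by_cases h : i = j
  · subst h
    simp only [if_pos rfl]
    rw [Finset.sum_congr rfl (fun σ _ => eps_sq σ i)]
    simp [card_bool_fun]
  · simp only [if_neg h]
    refine flip_sum_zero i _ (fun σ => ?_)
    rw [eps_mmflip_self, eps_mmflip_ne i j σ (Ne.symm h)]
    ring

lemma bern_total (π : Fin N → ℝ) :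
    ∑ s : Finset (Fin N), ∏ k, (if k ∈ s then π k else 1 - π k) = 1 := by
  rw [bern_sum]; simp

lemma Ind_sq (i : Fin N) (s : Finset (Fin N)) : Ind i s * Ind i s = Ind i s := by
  unfold Ind; by_cases h : i ∈ s <;> simp [h]

lemma bern_pair_all (π : Fin N → ℝ) (i j : Fin N) :
    ∑ s : Finset (Fin N), Ind i s * Ind j s * ∏ k, (if k ∈ s then π k else 1 - π k)
      = if i = j then π i else π i * π j := by
  by_cases h : i = j
  · subst h
    rw [if_pos rfl, ← bern_incl π i]
    exact Finset.sum_congr rfl fun s _ => by rw [Ind_sq]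
  · rw [if_neg h]; exact bern_pair π i j h

lemma bern_risk (π : Fin N → ℝ) (hπ : ∀ i, π i ≠ 0) (w : Fin N → ℝ) :
    ∑ s : Finset (Fin N),
        (∏ k, (if k ∈ s then π k else 1 - π k)) * (∑ i, w i * (Ind i s / π i - 1)) ^ 2
      = ∑ i, w i ^ 2 * ((1 - π i) / π i) := by
  set P : Finset (Fin N) → ℝ := fun s => ∏ k, (if k ∈ s then π k else 1 - π k) with hP
  have inner : ∀ i j : Fin N,
      (∑ s : Finset (Fin N), P s * (w i * (Ind i s / π i - 1)) * (w j * (Ind j s / π j - 1)))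
        = if i = j then w i ^ 2 * ((1 - π i) / π i) else 0 := by
    intro i j
    have expand : ∀ s : Finset (Fin N),
        P s * (w i * (Ind i s / π i - 1)) * (w j * (Ind j s / π j - 1))
          = (w i * w j / (π i * π j)) * (Ind i s * Ind j s * P s)
            - (w i * w j / π i) * (Ind i s * P s)
            - (w i * w j / π j) * (Ind j s * P s)
            + (w i * w j) * P s := by
      intro s
      field_simp
      ring
    rw [Finset.sum_congr rfl fun s _ => expand s]
    rw [Finset.sum_add_distrib, Finset.sum_sub_distrib, Finset.sum_sub_distrib,
      ← Finset.mul_sum, ← Finset.mul_sum, ← Finset.mul_sum, ← Finset.mul_sum]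
    rw [bern_pair_all π i j]
    have h1 : (∑ s : Finset (Fin N), Ind i s * P s) = π i := bern_incl π i
    have h2 : (∑ s : Finset (Fin N), Ind j s * P s) = π j := bern_incl π j
    rw [h1, h2, bern_total π]
    by_cases h : i = j
    · subst h; rw [if_pos rfl, if_pos rfl]
      field_simp [hπ i]
      ring
    · rw [if_neg h, if_neg h]
      field_simp [hπ i, hπ j]
      ring
  calc ∑ s : Finset (Fin N), P s * (∑ i, w i * (Ind i s / π i - 1)) ^ 2
      = ∑ s : Finset (Fin N), ∑ i, ∑ j,
          P s * (w i * (Ind i s / π i - 1)) * (w j * (Ind j s / π j - 1)) := by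
        refine Finset.sum_congr rfl fun s _ => ?_
        rw [sq, Finset.sum_mul_sum, Finset.mul_sum]
        refine Finset.sum_congr rfl fun i _ => ?_
        rw [Finset.mul_sum]
        refine Finset.sum_congr rfl fun j _ => ?_
        ring
    _ = ∑ i, ∑ j, ∑ s : Finset (Fin N),
          P s * (w i * (Ind i s / π i - 1)) * (w j * (Ind j s / π j - 1)) := by
        rw [Finset.sum_comm]
        exact Finset.sum_congr rfl fun i _ => Finset.sum_comm
    _ = ∑ i, ∑ j, (if i = j then w i ^ 2 * ((1 - π i) / π i) else 0) := by
        exact Finset.sum_congr rfl fun i _ => Finset.sum_congr rfl fun j _ => inner i j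
    _ = ∑ i, w i ^ 2 * ((1 - π i) / π i) := by
        refine Finset.sum_congr rfl fun i _ => ?_
        simp

lemma opt_pt (A p t cc : ℝ) (hA : 0 < A) (hp : 0 < p) (hp1 : p ≤ 1) (hc : 0 < cc)
    (ht : t = min 1 (cc * A)) :
    A ^ 2 * ((1 - t) / t) + (1 / cc ^ 2) * t
      ≤ A ^ 2 * ((1 - p) / p) + (1 / cc ^ 2) * p := by
  have ht0 : 0 < t := by
    rw [ht]; exact lt_min one_pos (mul_pos hc hA)
  rcases min_cases 1 (cc * A) with ⟨h1, h2⟩ | ⟨h1, h2⟩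
  · -- t = 1, cc * A ≥ 1
    rw [ht, h1]
    have key : A ^ 2 * ((1 - p) / p) + (1 / cc ^ 2) * p
        - (A ^ 2 * ((1 - 1) / 1) + (1 / cc ^ 2) * 1)
        = (1 - p) * (A ^ 2 * cc ^ 2 - p) / (p * cc ^ 2) := by
      field_simp
      ring
    have hnum : 0 ≤ (1 - p) * (A ^ 2 * cc ^ 2 - p) := by
      apply mul_nonneg (by linarith)
      nlinarith [h2, mul_pos hc hA]
    have : 0 ≤ (1 - p) * (A ^ 2 * cc ^ 2 - p) / (p * cc ^ 2) :=
      div_nonneg hnum (by positivity)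
    linarith [key ▸ this]
  · -- t = cc * A
    rw [ht, h1]
    have hca : 0 < cc * A := mul_pos hc hA
    have key : A ^ 2 * ((1 - p) / p) + (1 / cc ^ 2) * p
        - (A ^ 2 * ((1 - cc * A) / (cc * A)) + (1 / cc ^ 2) * (cc * A))
        = (A * cc - p) ^ 2 / (p * cc ^ 2) := by
      field_simp
      ring
    have : 0 ≤ (A * cc - p) ^ 2 / (p * cc ^ 2) := by positivity
    linarith [key ▸ this]

lemma opt_sum {N : ℕ} (r : Fin N → ℝ) (hrpos : ∀ i, 0 < r i) (c : ℝ) (hc : 0 < c)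
    (n : ℝ) (hcsum : ∑ i, min 1 (c * r i) = n)
    (π : Fin N → ℝ) (hπ : ∀ i, 0 < π i ∧ π i ≤ 1) (hπn : (∑ i, π i) ≤ n) :
    ∑ i, r i ^ 2 * ((1 - min 1 (c * r i)) / min 1 (c * r i))
      ≤ ∑ i, r i ^ 2 * ((1 - π i) / π i) := by
  have key : ∑ i, (r i ^ 2 * ((1 - min 1 (c * r i)) / min 1 (c * r i))
        + (1 / c ^ 2) * min 1 (c * r i))
      ≤ ∑ i, (r i ^ 2 * ((1 - π i) / π i) + (1 / c ^ 2) * π i) :=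
    Finset.sum_le_sum fun i _ =>
      opt_pt (r i) (π i) _ c (hrpos i) (hπ i).1 (hπ i).2 hc rfl
  rw [Finset.sum_add_distrib, Finset.sum_add_distrib, ← Finset.mul_sum, ← Finset.mul_sum,
    hcsum] at key
  have h2 : (1 / c ^ 2) * (∑ i, π i) ≤ (1 / c ^ 2) * n :=
    mul_le_mul_of_nonneg_left hπn (by positivity)
  linarith

lemma sum_eps_lin (f : Fin N → ℝ) :
    ∑ σ : Fin N → Bool, ∑ i, eps σ i * f i = 0 := by
  rw [Finset.sum_comm]
  refine Finset.sum_eq_zero fun i _ => ?_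
  rw [← Finset.sum_mul, sum_eps, zero_mul]

lemma sum_eps_bilin (f g : Fin N → ℝ) :
    ∑ σ : Fin N → Bool, (∑ i, eps σ i * f i) * (∑ j, eps σ j * g j)
      = 2 ^ N * ∑ i, f i * g i := by
  have step : ∀ σ : Fin N → Bool, (∑ i, eps σ i * f i) * (∑ j, eps σ j * g j)
      = ∑ i, ∑ j, (eps σ i * eps σ j) * (f i * g j) := by
    intro σ
    rw [Finset.sum_mul_sum]
    exact Finset.sum_congr rfl fun i _ => Finset.sum_congr rfl fun j _ => by ring
  rw [Finset.sum_congr rfl fun σ _ => step σ, Finset.sum_comm]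
  have : ∀ i : Fin N, ∑ σ : Fin N → Bool, ∑ j, (eps σ i * eps σ j) * (f i * g j)
      = 2 ^ N * (f i * g i) := by
    intro i
    rw [Finset.sum_comm]
    have : ∀ j : Fin N, ∑ σ : Fin N → Bool, (eps σ i * eps σ j) * (f i * g j)
        = (if i = j then (2:ℝ) ^ N else 0) * (f i * g j) := by
      intro j; rw [← Finset.sum_mul, sum_eps_mul]
    rw [Finset.sum_congr rfl fun j _ => this j]
    simp
  rw [Finset.sum_congr rfl fun i _ => this i, ← Finset.mul_sum]

lemma lower_bound (a b m r : Fin N → ℝ)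
    (hm : ∀ i, m i = (a i + b i) / 2) (hr : ∀ i, r i = (b i - a i) / 2)
    (hrpos : ∀ i, 0 < r i)
    (p : Finset (Fin N) → ℝ) (hp0 : ∀ s, 0 ≤ p s)
    (hp1 : (∑ s : Finset (Fin N), p s) = 1)
    (π : Fin N → ℝ)
    (hπdef : ∀ i, π i = ∑ s : Finset (Fin N), if i ∈ s then p s else 0)
    (hπpos : ∀ i, 0 < π i)
    (δ : Finset (Fin N) → (Fin N → ℝ) → ℝ)
    (hmeas : ∀ s (y y' : Fin N → ℝ), (∀ i ∈ s, y i = y' i) → δ s y = δ s y')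
    (hunb : ∀ y : Fin N → ℝ, (∀ i, y i ∈ Set.Icc (a i) (b i)) →
      ∑ s : Finset (Fin N), p s * δ s y = ∑ i, y i)
    (M : ℝ)
    (hM : ∀ y : Fin N → ℝ, (∀ i, y i ∈ Set.Icc (a i) (b i)) →
      ∑ s : Finset (Fin N), p s * (δ s y - ∑ i, y i) ^ 2 ≤ M) :
    ∑ i, r i ^ 2 * ((1 - π i) / π i) ≤ M := by
  classical
  set V := ∑ i, r i ^ 2 * ((1 - π i) / π i) with hV
  -- the random population
  set y : (Fin N → Bool) → Fin N → ℝ := fun σ i => m i + eps σ i * r i with hy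
  have hyΘ : ∀ σ, ∀ i, y σ i ∈ Set.Icc (a i) (b i) := by
    intro σ i
    have h1 : m i + r i = b i := by rw [hm i, hr i]; ring
    have h2 : m i - r i = a i := by rw [hm i, hr i]; ring
    constructor <;> (simp only [hy, eps]; cases σ i <;> simp <;> nlinarith [hrpos i])
  -- basic inclusion identities
  have hPI : ∀ i, (∑ s : Finset (Fin N), p s * Ind i s) = π i := by
    intro i
    rw [hπdef i]
    refine Finset.sum_congr rfl fun s _ => ?_
    unfold Ind; by_cases h : i ∈ s <;> simp [h]
  -- coefficient function
  set co : Fin N → Finset (Fin N) → ℝ := fun i s => Ind i s / π i - 1 with hco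
  have h_sum_c : ∀ i, (∑ s : Finset (Fin N), p s * co i s) = 0 := by
    intro i
    have : ∀ s : Finset (Fin N), p s * co i s = (p s * Ind i s) * (π i)⁻¹ - p s := by
      intro s; simp only [hco]; ring
    rw [Finset.sum_congr rfl fun s _ => this s, Finset.sum_sub_distrib, ← Finset.sum_mul,
      hPI, hp1, mul_inv_cancel₀ (hπpos i).ne', sub_self]
  have h_sum_c2 : ∀ i, (∑ s : Finset (Fin N), p s * co i s ^ 2) = (π i)⁻¹ - 1 := by
    intro i
    have hIsq : ∀ s, Ind i s * Ind i s = Ind i s := by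
      intro s; unfold Ind; by_cases h : i ∈ s <;> simp [h]
    have : ∀ s : Finset (Fin N), p s * co i s ^ 2
        = (p s * Ind i s) * ((π i)⁻¹ * (π i)⁻¹ - 2 * (π i)⁻¹) + p s := by
      intro s; simp only [hco, Ind]
      by_cases h : i ∈ s <;> simp only [if_pos, if_neg, h, if_true, if_false] <;> ring
    rw [Finset.sum_congr rfl fun s _ => this s, Finset.sum_add_distrib,
      ← Finset.sum_mul, hPI, hp1]
    have h0 : π i ≠ 0 := (hπpos i).ne'
    field_simp
    ring
  -- G
  set G : (Fin N → Bool) → Finset (Fin N) → ℝ :=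
    fun σ s => ∑ i, eps σ i * (r i * co i s) with hG
  -- (a') per-s
  have ha' : ∀ s : Finset (Fin N), (∑ σ : Fin N → Bool, G σ s ^ 2)
      = 2 ^ N * ∑ i, (r i * co i s) ^ 2 := by
    intro s
    have := sum_eps_bilin (fun i => r i * co i s) (fun i => r i * co i s)
    simp only [hG, sq]
    rw [this]
  have haa : (∑ s : Finset (Fin N), p s * ∑ σ : Fin N → Bool, G σ s ^ 2) = 2 ^ N * V := by
    have : ∀ s : Finset (Fin N), p s * ∑ σ : Fin N → Bool, G σ s ^ 2
        = 2 ^ N * ∑ i, (r i ^ 2) * (p s * co i s ^ 2) := by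
      intro s
      rw [ha' s, Finset.mul_sum, Finset.mul_sum, Finset.mul_sum]
      refine Finset.sum_congr rfl fun i _ => by ring
    rw [Finset.sum_congr rfl fun s _ => this s, ← Finset.mul_sum, Finset.sum_comm]
    have : ∀ i : Fin N, (∑ s : Finset (Fin N), r i ^ 2 * (p s * co i s ^ 2))
        = r i ^ 2 * ((π i)⁻¹ - 1) := by
      intro i; rw [← Finset.mul_sum, h_sum_c2 i]
    rw [Finset.sum_congr rfl fun i _ => this i]
    congr 1
    refine Finset.sum_congr rfl fun i _ => ?_
    have h0 := (hπpos i).ne'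
    field_simp
  -- (t') : total * G
  have ht' : (∑ s : Finset (Fin N), p s * ∑ σ : Fin N → Bool, (∑ i, y σ i) * G σ s) = 0 := by
    have hTσ : ∀ σ : Fin N → Bool, (∑ i, y σ i) = (∑ i, m i) + ∑ i, eps σ i * r i := by
      intro σ; rw [← Finset.sum_add_distrib]
    have key : ∀ s : Finset (Fin N), (∑ σ : Fin N → Bool, (∑ i, y σ i) * G σ s)
        = 2 ^ N * ∑ i, r i * (r i * co i s) := by
      intro s
      have : ∀ σ : Fin N → Bool, (∑ i, y σ i) * G σ s
          = (∑ i, m i) * G σ s + (∑ i, eps σ i * r i) * G σ s := by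
        intro σ; rw [hTσ σ]; ring
      rw [Finset.sum_congr rfl fun σ _ => this σ, Finset.sum_add_distrib, ← Finset.mul_sum]
      have h1 : (∑ σ : Fin N → Bool, G σ s) = 0 := sum_eps_lin _
      rw [h1, mul_zero, zero_add]
      exact sum_eps_bilin (fun i => r i) (fun i => r i * co i s)
    have : ∀ s : Finset (Fin N), p s * ∑ σ : Fin N → Bool, (∑ i, y σ i) * G σ s
        = 2 ^ N * ∑ i, (r i ^ 2) * (p s * co i s) := by
      intro s
      rw [key s, Finset.mul_sum, Finset.mul_sum, Finset.mul_sum]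
      refine Finset.sum_congr rfl fun i _ => by ring
    rw [Finset.sum_congr rfl fun s _ => this s, ← Finset.mul_sum, Finset.sum_comm]
    have : ∀ i : Fin N, (∑ s : Finset (Fin N), r i ^ 2 * (p s * co i s)) = 0 := by
      intro i; rw [← Finset.mul_sum, h_sum_c i, mul_zero]
    rw [Finset.sum_congr rfl fun i _ => this i]
    simp
  -- (c') : δ * G
  have hc' : (∑ s : Finset (Fin N), p s * ∑ σ : Fin N → Bool, δ s (y σ) * G σ s)
      = 2 ^ N * V := by
    have key1 : ∀ i, ∀ s : Finset (Fin N), i ∉ s →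
        (∑ σ : Fin N → Bool, δ s (y σ) * eps σ i) = 0 := by
      intro i s his
      refine flip_sum_zero i _ fun σ => ?_
      have hδeq : δ s (y (mmflip i σ)) = δ s (y σ) := by
        refine hmeas s _ _ fun j hj => ?_
        have hji : j ≠ i := fun e => his (e ▸ hj)
        simp only [hy, eps_mmflip_ne i j σ hji]
      rw [hδeq, eps_mmflip_self]
      ring
    have key2 : ∀ i, ∀ s : Finset (Fin N),
        co i s * (∑ σ : Fin N → Bool, δ s (y σ) * eps σ i)
          = ((π i)⁻¹ - 1) * (∑ σ : Fin N → Bool, δ s (y σ) * eps σ i) := by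
      intro i s
      by_cases h : i ∈ s
      · simp only [hco, Ind, if_pos h]
        rw [one_div]
      · rw [key1 i s h, mul_zero, mul_zero]
    have key3 : ∀ i, (∑ s : Finset (Fin N), p s * ∑ σ : Fin N → Bool, δ s (y σ) * eps σ i)
        = 2 ^ N * r i := by
      intro i
      have swap : (∑ s : Finset (Fin N), p s * ∑ σ : Fin N → Bool, δ s (y σ) * eps σ i)
          = ∑ σ : Fin N → Bool, eps σ i * ∑ s : Finset (Fin N), p s * δ s (y σ) := by
        calc (∑ s : Finset (Fin N), p s * ∑ σ : Fin N → Bool, δ s (y σ) * eps σ i)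
            = ∑ s : Finset (Fin N), ∑ σ : Fin N → Bool, p s * (δ s (y σ) * eps σ i) := by
              exact Finset.sum_congr rfl fun s _ => Finset.mul_sum _ _ _
          _ = ∑ σ : Fin N → Bool, ∑ s : Finset (Fin N), p s * (δ s (y σ) * eps σ i) :=
              Finset.sum_comm
          _ = ∑ σ : Fin N → Bool, eps σ i * ∑ s : Finset (Fin N), p s * δ s (y σ) := by
              refine Finset.sum_congr rfl fun σ _ => ?_
              rw [Finset.mul_sum]
              exact Finset.sum_congr rfl fun s _ => by ring
      rw [swap]
      have : ∀ σ : Fin N → Bool, eps σ i * ∑ s : Finset (Fin N), p s * δ s (y σ)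
          = eps σ i * (∑ j, m j) + ∑ j, (eps σ i * eps σ j) * r j := by
        intro σ
        rw [hunb (y σ) (hyΘ σ)]
        have h1 : (∑ j, y σ j) = (∑ j, m j) + ∑ j, eps σ j * r j := by
          rw [← Finset.sum_add_distrib]
        rw [h1, mul_add]
        congr 1
        rw [Finset.mul_sum]
        exact Finset.sum_congr rfl fun j _ => by ring
      rw [Finset.sum_congr rfl fun σ _ => this σ, Finset.sum_add_distrib, ← Finset.sum_mul,
        sum_eps, zero_mul, zero_add, Finset.sum_comm]
      have : ∀ j : Fin N, (∑ σ : Fin N → Bool, (eps σ i * eps σ j) * r j)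
          = (if i = j then (2:ℝ) ^ N else 0) * r j := by
        intro j; rw [← Finset.sum_mul, sum_eps_mul]
      rw [Finset.sum_congr rfl fun j _ => this j]
      simp
    -- assemble c'
    have per_s : ∀ s : Finset (Fin N), (∑ σ : Fin N → Bool, δ s (y σ) * G σ s)
        = ∑ i, (r i * ((π i)⁻¹ - 1)) * ∑ σ : Fin N → Bool, δ s (y σ) * eps σ i := by
      intro s
      have h1 : ∀ σ : Fin N → Bool, δ s (y σ) * G σ s
          = ∑ i, (r i * co i s) * (δ s (y σ) * eps σ i) := by
        intro σ
        simp only [hG, Finset.mul_sum]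
        exact Finset.sum_congr rfl fun i _ => by ring
      rw [Finset.sum_congr rfl fun σ _ => h1 σ, Finset.sum_comm]
      refine Finset.sum_congr rfl fun i _ => ?_
      rw [← Finset.mul_sum]
      have h2 := key2 i s
      linear_combination r i * h2
    have h3 : ∀ s : Finset (Fin N), p s * ∑ σ : Fin N → Bool, δ s (y σ) * G σ s
        = ∑ i, (r i * ((π i)⁻¹ - 1)) *
            (p s * ∑ σ : Fin N → Bool, δ s (y σ) * eps σ i) := by
      intro s
      rw [per_s s, Finset.mul_sum]
      exact Finset.sum_congr rfl fun i _ => by ring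
    rw [Finset.sum_congr rfl fun s _ => h3 s, Finset.sum_comm]
    have h4 : ∀ i : Fin N, (∑ s : Finset (Fin N), (r i * ((π i)⁻¹ - 1)) *
          (p s * ∑ σ : Fin N → Bool, δ s (y σ) * eps σ i))
        = 2 ^ N * (r i ^ 2 * ((1 - π i) / π i)) := by
      intro i
      rw [← Finset.mul_sum, key3 i]
      have h0 := (hπpos i).ne'
      field_simp
    rw [Finset.sum_congr rfl fun i _ => h4 i, ← Finset.mul_sum]
  -- grand assembly
  have assemble : (∑ σ : Fin N → Bool, ∑ s : Finset (Fin N),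
        p s * (δ s (y σ) - ∑ i, y σ i) ^ 2)
      = (∑ σ : Fin N → Bool, ∑ s : Finset (Fin N),
          p s * (δ s (y σ) - (∑ i, y σ i) - G σ s) ^ 2) + 2 ^ N * V := by
    have point : ∀ σ, ∀ s : Finset (Fin N),
        p s * (δ s (y σ) - ∑ i, y σ i) ^ 2
          = p s * (δ s (y σ) - (∑ i, y σ i) - G σ s) ^ 2
            + (2 * (p s * (δ s (y σ) * G σ s))
              - 2 * (p s * ((∑ i, y σ i) * G σ s)) - p s * G σ s ^ 2) := by
      intro σ s; ring
    rw [Finset.sum_congr rfl fun σ _ => Finset.sum_congr rfl fun s _ => point σ s]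
    have split : ∀ σ : Fin N → Bool, (∑ s : Finset (Fin N),
        (p s * (δ s (y σ) - (∑ i, y σ i) - G σ s) ^ 2
          + (2 * (p s * (δ s (y σ) * G σ s))
            - 2 * (p s * ((∑ i, y σ i) * G σ s)) - p s * G σ s ^ 2)))
        = (∑ s : Finset (Fin N), p s * (δ s (y σ) - (∑ i, y σ i) - G σ s) ^ 2)
          + (2 * (∑ s : Finset (Fin N), p s * (δ s (y σ) * G σ s))
            - 2 * (∑ s : Finset (Fin N), p s * ((∑ i, y σ i) * G σ s))
            - ∑ s : Finset (Fin N), p s * G σ s ^ 2) := by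
      intro σ
      rw [Finset.sum_add_distrib, Finset.sum_sub_distrib, Finset.sum_sub_distrib,
        ← Finset.mul_sum, ← Finset.mul_sum]
    rw [Finset.sum_congr rfl fun σ _ => split σ, Finset.sum_add_distrib]
    congr 1
    have e1 : (∑ σ : Fin N → Bool, (2 * (∑ s : Finset (Fin N), p s * (δ s (y σ) * G σ s))
        - 2 * (∑ s : Finset (Fin N), p s * ((∑ i, y σ i) * G σ s))
        - ∑ s : Finset (Fin N), p s * G σ s ^ 2))
        = 2 * (∑ σ : Fin N → Bool, ∑ s : Finset (Fin N), p s * (δ s (y σ) * G σ s))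
          - 2 * (∑ σ : Fin N → Bool, ∑ s : Finset (Fin N), p s * ((∑ i, y σ i) * G σ s))
          - ∑ σ : Fin N → Bool, ∑ s : Finset (Fin N), p s * G σ s ^ 2 := by
      rw [Finset.sum_sub_distrib, Finset.sum_sub_distrib, ← Finset.mul_sum, ← Finset.mul_sum]
    rw [e1]
    have swap1 : ∀ (F : (Fin N → Bool) → Finset (Fin N) → ℝ),
        (∑ σ : Fin N → Bool, ∑ s : Finset (Fin N), p s * F σ s)
          = ∑ s : Finset (Fin N), p s * ∑ σ : Fin N → Bool, F σ s := by
      intro F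
      rw [Finset.sum_comm]
      exact Finset.sum_congr rfl fun s _ => (Finset.mul_sum _ _ _).symm
    rw [swap1 (fun σ s => δ s (y σ) * G σ s), swap1 (fun σ s => (∑ i, y σ i) * G σ s),
      swap1 (fun σ s => G σ s ^ 2), hc', ht', haa]
    ring
  -- finish
  have hD2 : 0 ≤ ∑ σ : Fin N → Bool, ∑ s : Finset (Fin N),
      p s * (δ s (y σ) - (∑ i, y σ i) - G σ s) ^ 2 :=
    Finset.sum_nonneg fun σ _ => Finset.sum_nonneg fun s _ =>
      mul_nonneg (hp0 s) (sq_nonneg _)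
  have hub : (∑ σ : Fin N → Bool, ∑ s : Finset (Fin N),
      p s * (δ s (y σ) - ∑ i, y σ i) ^ 2) ≤ 2 ^ N * M := by
    calc (∑ σ : Fin N → Bool, ∑ s : Finset (Fin N), p s * (δ s (y σ) - ∑ i, y σ i) ^ 2)
        ≤ ∑ _σ : Fin N → Bool, M := Finset.sum_le_sum fun σ _ => hM (y σ) (hyΘ σ)
      _ = 2 ^ N * M := by
          rw [Finset.sum_const, card_bool_fun N]
          rw [nsmul_eq_mul]
          push_cast
          ring
  have h2N : (0:ℝ) < 2 ^ N := by positivity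
  nlinarith [assemble, hD2, hub]


lemma sum_ind {N : ℕ} (s : Finset (Fin N)) (f : Fin N → ℝ) :
    ∑ i, Ind i s * f i = ∑ i ∈ s, f i := by
  have h : ∀ i, Ind i s * f i = if i ∈ s then f i else 0 := by
    intro i; unfold Ind; by_cases hh : i ∈ s <;> simp [hh]
  rw [Finset.sum_congr rfl fun i _ => h i, Finset.sum_ite_mem, Finset.univ_inter]

end MMX

open MMX in
theorem minimax_design_and_estimator
    (N : ℕ) (a b : Fin N → ℝ)
    (m r : Fin N → ℝ)
    (hm : ∀ i, m i = (a i + b i) / 2)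
    (hr : ∀ i, r i = (b i - a i) / 2) (hrpos : ∀ i, 0 < r i)
    (n : ℝ) (hn0 : 0 < n) (hnN : n < (N : ℝ))
    (Vn : ℝ)
    (hVn : IsLeast {v : ℝ | ∃ π : Fin N → ℝ, (∀ i, 0 < π i ∧ π i ≤ 1) ∧
      (∑ i, π i) ≤ n ∧ v = ∑ i, r i ^ 2 * ((1 - π i) / π i)} Vn)
    (c : ℝ) (hc : 0 < c) (hcsum : ∑ i, min 1 (c * r i) = n)
    (πs : Fin N → ℝ) (hπs : ∀ i, πs i = min 1 (c * r i))
    (ps : Finset (Fin N) → ℝ)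
    (hps : ∀ s, ps s = ∏ i, if i ∈ s then πs i else 1 - πs i) :
    -- lower bound over all admissible design–estimator pairs
    (∀ p : Finset (Fin N) → ℝ, (∀ s, 0 ≤ p s) →
      (∑ s : Finset (Fin N), p s) = 1 →
      ∀ π : Fin N → ℝ,
        (∀ i, π i = ∑ s : Finset (Fin N), if i ∈ s then p s else 0) →
        (∀ i, 0 < π i) → (∑ i, π i) ≤ n →
        ∀ δ : Finset (Fin N) → (Fin N → ℝ) → ℝ,
          (∀ s (y y' : Fin N → ℝ), (∀ i ∈ s, y i = y' i) → δ s y = δ s y') →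
          (∀ y : Fin N → ℝ, (∀ i, y i ∈ Set.Icc (a i) (b i)) →
            ∑ s : Finset (Fin N), p s * δ s y = ∑ i, y i) →
          ∀ M : ℝ,
            (∀ y : Fin N → ℝ, (∀ i, y i ∈ Set.Icc (a i) (b i)) →
              ∑ s : Finset (Fin N), p s * (δ s y - ∑ i, y i) ^ 2 ≤ M) →
            Vn ≤ M) ∧
    -- ps is a sampling design with inclusion probabilities πs, expected size n
    ((∀ s, 0 ≤ ps s) ∧ (∑ s : Finset (Fin N), ps s) = 1 ∧
      (∀ i, (∑ s : Finset (Fin N), if i ∈ s then ps s else 0) = πs i) ∧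
      (∑ i, πs i) = n) ∧
    -- the midpoint-differenced HT estimator is unbiased under ps ...
    (∀ y : Fin N → ℝ, (∀ i, y i ∈ Set.Icc (a i) (b i)) →
      ∑ s : Finset (Fin N),
        ps s * ((∑ i, m i) + ∑ i ∈ s, (y i - m i) / πs i) = ∑ i, y i) ∧
    -- ... and its worst-case risk over Θ under ps is exactly Vn
    IsLUB ((fun y : Fin N → ℝ =>
        ∑ s : Finset (Fin N),
          ps s * (((∑ i, m i) + ∑ i ∈ s, (y i - m i) / πs i) - ∑ i, y i) ^ 2) ''
      {y : Fin N → ℝ | ∀ i, y i ∈ Set.Icc (a i) (b i)}) Vn := by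
  classical
  have hπspos : ∀ i, 0 < πs i := fun i => by
    rw [hπs i]; exact lt_min one_pos (mul_pos hc (hrpos i))
  have hπs1 : ∀ i, πs i ≤ 1 := fun i => by rw [hπs i]; exact min_le_left _ _
  have hπsne : ∀ i, πs i ≠ 0 := fun i => (hπspos i).ne'
  have hπssum : (∑ i, πs i) = n := by
    rw [Finset.sum_congr rfl fun i _ => hπs i]; exact hcsum
  set Vstar := ∑ i, r i ^ 2 * ((1 - πs i) / πs i) with hVstar
  have hmem : Vstar ∈ {v : ℝ | ∃ π : Fin N → ℝ, (∀ i, 0 < π i ∧ π i ≤ 1) ∧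
      (∑ i, π i) ≤ n ∧ v = ∑ i, r i ^ 2 * ((1 - π i) / π i)} :=
    ⟨πs, fun i => ⟨hπspos i, hπs1 i⟩, le_of_eq hπssum, hVstar⟩
  have hVleV : Vn ≤ Vstar := hVn.2 hmem
  have hVgeV : Vstar ≤ Vn := by
    obtain ⟨π₀, hfeas₀, hsum₀, heq₀⟩ := hVn.1
    rw [heq₀]
    have h1 : Vstar = ∑ i, r i ^ 2 * ((1 - min 1 (c * r i)) / min 1 (c * r i)) := by
      rw [hVstar]; exact Finset.sum_congr rfl fun i _ => by rw [hπs i]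
    rw [h1]
    exact MMX.opt_sum r hrpos c hc n hcsum π₀ hfeas₀ hsum₀
  have hVV : Vstar = Vn := le_antisymm hVgeV hVleV
  -- HT risk formula under ps
  have hrisk : ∀ y : Fin N → ℝ,
      (∑ s : Finset (Fin N),
          ps s * (((∑ i, m i) + ∑ i ∈ s, (y i - m i) / πs i) - ∑ i, y i) ^ 2)
        = ∑ i, (y i - m i) ^ 2 * ((1 - πs i) / πs i) := by
    intro y
    have base : ∀ s : Finset (Fin N),
        ((∑ i, m i) + ∑ i ∈ s, (y i - m i) / πs i) - ∑ i, y i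
          = ∑ i, (y i - m i) * (MMX.Ind i s / πs i - 1) := by
      intro s
      rw [← MMX.sum_ind s (fun i => (y i - m i) / πs i)]
      have h : ∀ i : Fin N, (y i - m i) * (MMX.Ind i s / πs i - 1)
          = MMX.Ind i s * ((y i - m i) / πs i) - (y i - m i) := by intro i; ring
      rw [Finset.sum_congr rfl fun i _ => h i, Finset.sum_sub_distrib,
        Finset.sum_sub_distrib]
      ring
    rw [Finset.sum_congr rfl fun s _ => by rw [hps s, base s]]
    exact MMX.bern_risk πs hπsne (fun i => y i - m i)
  refine ⟨?_, ⟨?_, ?_, ?_, hπssum⟩, ?_, ?_⟩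
  · -- lower bound
    intro p hp0 hp1 π hπdef hπpos hπn δ hmeas hunb M hM
    have hlb := MMX.lower_bound a b m r hm hr hrpos p hp0 hp1 π hπdef hπpos δ hmeas hunb M hM
    have hπ1 : ∀ i, π i ≤ 1 := by
      intro i
      rw [hπdef i, ← hp1]
      refine Finset.sum_le_sum fun s _ => ?_
      by_cases h : i ∈ s <;> simp [h, hp0 s]
    have hVle : Vn ≤ ∑ i, r i ^ 2 * ((1 - π i) / π i) :=
      hVn.2 ⟨π, fun i => ⟨hπpos i, hπ1 i⟩, hπn, rfl⟩
    linarith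
  · -- nonnegativity of ps
    intro s
    rw [hps s]
    refine Finset.prod_nonneg fun i _ => ?_
    by_cases h : i ∈ s
    · simp only [if_pos h]; exact le_of_lt (hπspos i)
    · simp only [if_neg h]; linarith [hπs1 i]
  · -- total mass 1
    rw [Finset.sum_congr rfl fun s _ => hps s]
    exact MMX.bern_total πs
  · -- inclusion probabilities
    intro i
    have h : ∀ s : Finset (Fin N), (if i ∈ s then ps s else 0)
        = MMX.Ind i s * ∏ j, (if j ∈ s then πs j else 1 - πs j) := by
      intro s; rw [hps s]; unfold MMX.Ind; by_cases hh : i ∈ s <;> simp [hh]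
    rw [Finset.sum_congr rfl fun s _ => h s]
    exact MMX.bern_incl πs i
  · -- unbiasedness of HT under ps
    intro y hy
    have expand : ∀ s : Finset (Fin N),
        ps s * ((∑ i, m i) + ∑ i ∈ s, (y i - m i) / πs i)
          = (∑ i, m i) * ps s + ∑ i, ((y i - m i) / πs i) * (MMX.Ind i s * ps s) := by
      intro s
      rw [← MMX.sum_ind s fun i => (y i - m i) / πs i, mul_add,
        mul_comm (ps s) (∑ i, m i)]
      congr 1
      rw [Finset.mul_sum]
      exact Finset.sum_congr rfl fun i _ => by ring
    rw [Finset.sum_congr rfl fun s _ => expand s, Finset.sum_add_distrib, ← Finset.mul_sum,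
      Finset.sum_comm]
    have h1 : (∑ s : Finset (Fin N), ps s) = 1 := by
      rw [Finset.sum_congr rfl fun s _ => hps s]; exact MMX.bern_total πs
    have h2 : ∀ i : Fin N,
        (∑ s : Finset (Fin N), ((y i - m i) / πs i) * (MMX.Ind i s * ps s))
          = y i - m i := by
      intro i
      rw [← Finset.mul_sum]
      have h3 : (∑ s : Finset (Fin N), MMX.Ind i s * ps s) = πs i := by
        rw [Finset.sum_congr rfl fun s _ => by rw [hps s]]
        exact MMX.bern_incl πs i
      rw [h3, div_mul_cancel₀ _ (hπsne i)]
    rw [h1, mul_one, Finset.sum_congr rfl fun i _ => h2 i, Finset.sum_sub_distrib]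
    ring
  · -- worst-case risk is exactly Vn
    refine IsGreatest.isLUB ⟨⟨b, fun i => ⟨?_, le_refl _⟩, ?_⟩, ?_⟩
    · -- a i ≤ b i
      have := hrpos i
      rw [hr i] at this
      linarith
    · -- value at y = b equals Vn
      show (∑ s : Finset (Fin N),
          ps s * (((∑ i, m i) + ∑ i ∈ s, (b i - m i) / πs i) - ∑ i, b i) ^ 2) = Vn
      rw [hrisk b]
      rw [← hVV, hVstar]
      refine Finset.sum_congr rfl fun i _ => ?_
      have h1 : b i - m i = r i := by rw [hm i, hr i]; ring
      rw [h1]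
    · -- upper bound
      rintro z ⟨y, hy, rfl⟩
      show (∑ s : Finset (Fin N),
          ps s * (((∑ i, m i) + ∑ i ∈ s, (y i - m i) / πs i) - ∑ i, y i) ^ 2) ≤ Vn
      rw [hrisk y]
      have h : ∀ i : Fin N, (y i - m i) ^ 2 * ((1 - πs i) / πs i)
          ≤ r i ^ 2 * ((1 - πs i) / πs i) := by
        intro i
        have h1 : (y i - m i) ^ 2 ≤ r i ^ 2 := by
          have h2 := (hy i).1
          have h3 := (hy i).2
          have h4 := hm i
          have h5 := hr i
          nlinarith
        exact mul_le_mul_of_nonneg_right h1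
          (div_nonneg (by linarith [hπs1 i]) (le_of_lt (hπspos i)))
      calc (∑ i, (y i - m i) ^ 2 * ((1 - πs i) / πs i))
          ≤ ∑ i, r i ^ 2 * ((1 - πs i) / πs i) := Finset.sum_le_sum fun i _ => h i
        _ = Vn := hVV
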